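/- Let p > d/(d+2) and t_n = n^p, Δt_n = t_n - t_{n-1}. Let λ be a measure on (0,∞) with ∫₀^∞ z log⁺(z) λ(dz) < ∞ where log⁺(t) = log(e+t). Then ∑_{n≥1} ∫₀^∞ ((z/t_n)^{2/d} ∧ Δt_n) · (z/t_n) λ(dz) < ∞. -/

import Mathlib

open MeasureTheory


-- one step telescoping bound
lemma step_ineq {r : ℝ} (hr : 0 < r) {m : ℝ} (hm : 1 ≤ m) :
    r * (m+1) ^ (-(r+1)) ≤ m ^ (-r) - (m+1) ^ (-r) := by
  have hm0 : (0:ℝ) < m := lt_of_lt_of_le one_pos hm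
  have hm1 : (0:ℝ) < m + 1 := by linarith
  obtain ⟨c, hc, hceq⟩ := exists_hasDerivAt_eq_slope (fun x : ℝ => x ^ (-r))
    (fun x => (-r) * x ^ (-r - 1)) (by linarith : m < m + 1)
    (by
      intro x hx
      exact (Real.continuousAt_rpow_const x (-r)
        (Or.inl (ne_of_gt (lt_of_lt_of_le hm0 hx.1)))).continuousWithinAt)
    (by
      intro x hx
      exact Real.hasDerivAt_rpow_const (Or.inl (ne_of_gt (lt_of_lt_of_le hm0 hx.1.le))))
  have hc0 : 0 < c := lt_trans hm0 hc.1
  have hle : c ≤ m + 1 := hc.2.le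
  have hkey : (m+1) ^ (-(r+1)) ≤ c ^ (-(r+1)) :=
    Real.rpow_le_rpow_of_nonpos hc0 hle (by linarith)
  have hslope : (-r) * c ^ (-r - 1) = (m+1) ^ (-r) - m ^ (-r) := by
    rw [hceq]; ring_nf
  have : r * c ^ (-(r+1)) = m ^ (-r) - (m+1) ^ (-r) := by
    have : -(r+1) = -r - 1 := by ring
    rw [this]; nlinarith [hslope]
  calc r * (m+1) ^ (-(r+1)) ≤ r * c ^ (-(r+1)) := by
        exact mul_le_mul_of_nonneg_left hkey hr.le
    _ = m ^ (-r) - (m+1) ^ (-r) := this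

lemma tail_sum_range {r : ℝ} (hr : 0 < r) {M : ℕ} (hM : 1 ≤ M) (N : ℕ) :
    ∑ n ∈ Finset.range N, ((M:ℝ) + n + 1) ^ (-(r+1)) ≤ (1/r) * (M:ℝ) ^ (-r) := by
  have hM1 : (1:ℝ) ≤ (M:ℝ) := by exact_mod_cast hM
  have key : ∀ N : ℕ, ∑ n ∈ Finset.range N, ((M:ℝ) + n + 1) ^ (-(r+1))
      ≤ (1/r) * ((M:ℝ) ^ (-r) - ((M:ℝ) + N) ^ (-r)) := by
    intro N
    induction N with
    | zero => simp
    | succ N ih =>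
      rw [Finset.sum_range_succ]
      have hs := step_ineq hr (show (1:ℝ) ≤ (M:ℝ) + N by
        have : (0:ℝ) ≤ (N:ℕ) := Nat.cast_nonneg N
        linarith)
      have h2 : ((M:ℝ) + N + 1) ^ (-(r+1))
          ≤ (1/r) * (((M:ℝ) + N) ^ (-r) - ((M:ℝ) + N + 1) ^ (-r)) := by
        rw [one_div, mul_comm, ← div_eq_mul_inv, le_div_iff₀ hr]
        nlinarith [hs]
      have hcast : ((M:ℝ) + (N:ℝ) + 1) = ((M:ℝ) + ((N+1 : ℕ):ℝ)) := by push_cast; ring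
      calc _ ≤ (1/r) * ((M:ℝ) ^ (-r) - ((M:ℝ) + N) ^ (-r))
            + (1/r) * (((M:ℝ) + N) ^ (-r) - ((M:ℝ) + N + 1) ^ (-r)) := add_le_add ih h2
        _ = (1/r) * ((M:ℝ) ^ (-r) - ((M:ℝ) + ((N+1:ℕ):ℝ)) ^ (-r)) := by
            rw [← hcast]; ring
  calc _ ≤ (1/r) * ((M:ℝ) ^ (-r) - ((M:ℝ) + N) ^ (-r)) := key N
    _ ≤ (1/r) * (M:ℝ) ^ (-r) := by
        have : (0:ℝ) ≤ ((M:ℝ) + N) ^ (-r) := Real.rpow_nonneg (by positivity) _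
        have h1r : (0:ℝ) ≤ 1/r := by positivity
        nlinarith

lemma tail_tsum {r : ℝ} (hr : 0 < r) {M : ℕ} (hM : 1 ≤ M) :
    ∑' n : ℕ, ENNReal.ofReal (((M:ℝ) + n + 1) ^ (-(r+1)))
      ≤ ENNReal.ofReal ((1/r) * (M:ℝ) ^ (-r)) := by
  rw [ENNReal.tsum_eq_iSup_sum]
  refine iSup_le fun s => ?_
  obtain ⟨N, hN⟩ := s.exists_nat_subset_range
  calc ∑ n ∈ s, ENNReal.ofReal (((M:ℝ) + n + 1) ^ (-(r+1)))
      ≤ ∑ n ∈ Finset.range N, ENNReal.ofReal (((M:ℝ) + n + 1) ^ (-(r+1))) :=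
        Finset.sum_le_sum_of_subset hN
    _ = ENNReal.ofReal (∑ n ∈ Finset.range N, ((M:ℝ) + n + 1) ^ (-(r+1))) :=
        (ENNReal.ofReal_sum_of_nonneg fun i _ => Real.rpow_nonneg (by positivity) _).symm
    _ ≤ _ := ENNReal.ofReal_le_ofReal (tail_sum_range hr hM N)

lemma harmonic_bound : ∀ M : ℕ, ∑ n ∈ Finset.range M, (1/((n:ℝ)+1)) ≤ 1 + Real.log M := by
  intro M
  induction M with
  | zero => simp
  | succ M ih =>
    rw [Finset.sum_range_succ]
    rcases Nat.eq_zero_or_pos M with h | h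
    · subst h; simp
    have hM : (1:ℝ) ≤ (M:ℝ) := by exact_mod_cast h
    have hlog : Real.log M + 1/((M:ℝ)+1) ≤ Real.log (M+1) := by
      have hx : (0:ℝ) < (M:ℝ)/((M:ℝ)+1) := by positivity
      have := Real.log_le_sub_one_of_pos hx
      rw [Real.log_div (by linarith) (by linarith)] at this
      have heq : (M:ℝ)/((M:ℝ)+1) - 1 = -(1/((M:ℝ)+1)) := by field_simp; ring
      linarith [this, heq ▸ this]
    push_cast
    linarith

lemma one_sub_rpow_le {x p : ℝ} (hx0 : 0 ≤ x) (hx1 : x ≤ 1) (hp : 0 < p) :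
    1 - x ^ p ≤ (p+1) * (1-x) := by
  rcases le_or_gt p 1 with h | h
  · rcases eq_or_lt_of_le hx0 with h0 | h0
    · rw [← h0, Real.zero_rpow hp.ne']; nlinarith
    · have : x ^ (1:ℝ) ≤ x ^ p := Real.rpow_le_rpow_of_exponent_ge h0 hx1 h
      rw [Real.rpow_one] at this
      nlinarith
  · have hb := one_add_mul_self_le_rpow_one_add (show (-1:ℝ) ≤ x - 1 by linarith) h.le
    rw [show (1:ℝ) + (x-1) = x by ring] at hb
    nlinarith

set_option maxHeartbeats 1000000 in
lemma pointwise_bound (d : ℕ) (hd : 0 < d) (p : ℝ) (hp : (d : ℝ) / (d + 2) < p) :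
    ∃ C : ℝ, 0 ≤ C ∧ ∀ z : ℝ, 0 < z →
      (∑' n : ℕ, ENNReal.ofReal
          (min ((z / ((n : ℝ) + 1) ^ p) ^ (2 / (d : ℝ)))
              (((n : ℝ) + 1) ^ p - (n : ℝ) ^ p)
            * (z / ((n : ℝ) + 1) ^ p)))
        ≤ ENNReal.ofReal C * ENNReal.ofReal (z * Real.log (Real.exp 1 + z)) := by
  have hd0 : (0:ℝ) < (d:ℝ) := by exact_mod_cast hd
  have hp0 : 0 < p := lt_trans (div_pos hd0 (by linarith)) hp
  set s : ℝ := 2/(d:ℝ) + 1 with hs_def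
  have hs1 : 1 < s := by have : 0 < 2/(d:ℝ) := div_pos two_pos hd0
                         simp only [hs_def]; linarith
  set q : ℝ := p * s with hq_def
  have hq : 1 < q := by
    have h1 : (d:ℝ) < p * ((d:ℝ)+2) := by
      rw [div_lt_iff₀ (by linarith)] at hp; linarith
    have h3 : q * (d:ℝ) = 2*p + p*(d:ℝ) := by
      rw [hq_def, hs_def]; field_simp
    nlinarith
  set r : ℝ := q - 1 with hr_def
  have hr : 0 < r := by simp only [hr_def]; linarith
  set K : ℕ := max 1 ⌈2/((d:ℝ)*r)⌉₊ with hK_def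
  have hK1 : 1 ≤ K := le_max_left _ _
  have hKr : 2/(d:ℝ) ≤ (K:ℝ) * r := by
    have h1 : 2/((d:ℝ)*r) ≤ (K:ℝ) := by
      refine le_trans (Nat.le_ceil _) ?_
      exact_mod_cast Nat.le_max_right 1 ⌈2/((d:ℝ)*r)⌉₊
    have h2 : 2/(d:ℝ) = (2/((d:ℝ)*r))*r := by field_simp
    rw [h2]; exact mul_le_mul_of_nonneg_right h1 hr.le
  have hr1 : (0:ℝ) < 1/r := one_div_pos.mpr hr
  have hK0 : (0:ℝ) ≤ (K:ℝ) := Nat.cast_nonneg K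
  have hCpos : (0:ℝ) ≤ (p+1)*(1+(K:ℝ)) + 1/r := by nlinarith
  refine ⟨(p+1)*(1+(K:ℝ)) + 1/r, hCpos, fun z hz => ?_⟩
  -- setup M
  set L : ℕ := ⌈max 1 z⌉₊ with hL_def
  have hmax1 : (1:ℝ) ≤ max 1 z := le_max_left _ _
  have hL1 : 1 ≤ L := by
    rw [hL_def]; exact_mod_cast Nat.one_le_ceil_iff.mpr (by positivity)
  have hL1' : (1:ℝ) ≤ (L:ℝ) := by exact_mod_cast hL1
  have hLz : max 1 z ≤ (L:ℝ) := Nat.le_ceil _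
  have hLe : (L:ℝ) ≤ Real.exp 1 + z := by
    have h1 : (L:ℝ) < max 1 z + 1 := Nat.ceil_lt_add_one (by positivity)
    have h2 : Real.exp 1 ≥ 2 := by
      have := Real.add_one_le_exp 1; linarith
    rcases max_cases (1:ℝ) z with ⟨he, _⟩ | ⟨he, _⟩ <;> rw [he] at h1 <;> linarith
  set M : ℕ := L ^ K with hM_def
  have hM1 : 1 ≤ M := Nat.one_le_pow _ _ (by omega)
  have hMcast : (M:ℝ) = (L:ℝ)^(K:ℕ) := by rw [hM_def]; push_cast; ring
  have hlogz : 1 ≤ Real.log (Real.exp 1 + z) := by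
    calc (1:ℝ) = Real.log (Real.exp 1) := (Real.log_exp 1).symm
      _ ≤ _ := Real.log_le_log (Real.exp_pos 1) (by linarith)
  have hlogM : Real.log M ≤ (K:ℝ) * Real.log (Real.exp 1 + z) := by
    rw [hMcast, Real.log_pow]
    have : Real.log L ≤ Real.log (Real.exp 1 + z) :=
      Real.log_le_log (by linarith) hLe
    have hK0 : (0:ℝ) ≤ (K:ℝ) := Nat.cast_nonneg K
    exact mul_le_mul_of_nonneg_left this hK0
  -- term bounds
  set F : ℕ → ℝ := fun n => min ((z / ((n : ℝ) + 1) ^ p) ^ (2 / (d : ℝ)))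
      (((n : ℝ) + 1) ^ p - (n : ℝ) ^ p) * (z / ((n : ℝ) + 1) ^ p) with hF_def
  have ht : ∀ n : ℕ, (0:ℝ) < ((n:ℝ)+1)^p := fun n => Real.rpow_pos_of_pos (by positivity) p
  have hzt : ∀ n : ℕ, (0:ℝ) < z / ((n:ℝ)+1)^p := fun n => div_pos hz (ht n)
  have ha : ∀ n : ℕ, F n ≤ (p+1) * z * (1/((n:ℝ)+1)) := by
    intro n
    have h1 : F n ≤ (((n:ℝ)+1)^p - (n:ℝ)^p) * (z / ((n:ℝ)+1)^p) :=
      mul_le_mul_of_nonneg_right (min_le_right _ _) (hzt n).le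
    have hxd : ((n:ℝ)/((n:ℝ)+1))^p = (n:ℝ)^p / ((n:ℝ)+1)^p :=
      Real.div_rpow (Nat.cast_nonneg n) (by positivity) p
    have h2 : (((n:ℝ)+1)^p - (n:ℝ)^p) * (z / ((n:ℝ)+1)^p)
        = (1 - ((n:ℝ)/((n:ℝ)+1))^p) * z := by
      rw [hxd]; field_simp
    have h3 : 1 - ((n:ℝ)/((n:ℝ)+1))^p ≤ (p+1) * (1 - (n:ℝ)/((n:ℝ)+1)) :=
      one_sub_rpow_le (by positivity) ((div_le_one (by positivity)).mpr (by linarith)) hp0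
    have h4 : 1 - (n:ℝ)/((n:ℝ)+1) = 1/((n:ℝ)+1) := by field_simp; ring
    calc F n ≤ (1 - ((n:ℝ)/((n:ℝ)+1))^p) * z := by rw [← h2]; exact h1
      _ ≤ ((p+1) * (1/((n:ℝ)+1))) * z := by
          rw [← h4]; exact mul_le_mul_of_nonneg_right h3 hz.le
      _ = (p+1) * z * (1/((n:ℝ)+1)) := by ring
  have hb : ∀ n : ℕ, F n ≤ z ^ s * ((n:ℝ)+1) ^ (-q) := by
    intro n
    have h1 : F n ≤ (z / ((n:ℝ)+1)^p) ^ (2/(d:ℝ)) * (z / ((n:ℝ)+1)^p) :=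
      mul_le_mul_of_nonneg_right (min_le_left _ _) (hzt n).le
    have h2 : (z / ((n:ℝ)+1)^p) ^ (2/(d:ℝ)) * (z / ((n:ℝ)+1)^p)
        = (z / ((n:ℝ)+1)^p) ^ s := by
      rw [hs_def, Real.rpow_add (hzt n), Real.rpow_one]
    have h3 : (z / ((n:ℝ)+1)^p) ^ s = z ^ s / (((n:ℝ)+1)^p) ^ s :=
      Real.div_rpow hz.le (ht n).le s
    have h4 : (((n:ℝ)+1)^p) ^ s = ((n:ℝ)+1) ^ q := by
      rw [hq_def, ← Real.rpow_mul (by positivity)]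
    have h5 : z ^ s / ((n:ℝ)+1) ^ q = z ^ s * ((n:ℝ)+1) ^ (-q) := by
      rw [Real.rpow_neg (by positivity)]; ring
    rw [h2, h3, h4, h5] at h1; exact h1
  have hF0 : ∀ n : ℕ, 0 ≤ F n := by
    intro n
    apply mul_nonneg _ (hzt n).le
    apply le_min (Real.rpow_nonneg (hzt n).le _)
    · have : ((n:ℝ))^p ≤ ((n:ℝ)+1)^p :=
        Real.rpow_le_rpow (Nat.cast_nonneg n) (by linarith) hp0.le
      linarith
  -- split the sum
  set G : ℕ → ENNReal := fun n => ENNReal.ofReal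
      (min ((z / ((n : ℝ) + 1) ^ p) ^ (2 / (d : ℝ)))
          (((n : ℝ) + 1) ^ p - (n : ℝ) ^ p)
        * (z / ((n : ℝ) + 1) ^ p)) with hG_def
  have hGF : ∀ n : ℕ, G n = ENNReal.ofReal (F n) := fun n => rfl
  rw [show (∑' n : ℕ, G n) = _ from (Summable.sum_add_tsum_nat_add' (f := G) (k := M) ENNReal.summable).symm]
  simp only [hGF]
  have part1 : ∑ n ∈ Finset.range M, ENNReal.ofReal (F n)
      ≤ ENNReal.ofReal ((p+1)*(1+(K:ℝ)) * (z * Real.log (Real.exp 1 + z))) := by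
    calc ∑ n ∈ Finset.range M, ENNReal.ofReal (F n)
        = ENNReal.ofReal (∑ n ∈ Finset.range M, F n) :=
          (ENNReal.ofReal_sum_of_nonneg fun i _ => hF0 i).symm
      _ ≤ _ := by
          apply ENNReal.ofReal_le_ofReal
          calc ∑ n ∈ Finset.range M, F n
              ≤ ∑ n ∈ Finset.range M, (p+1) * z * (1/((n:ℝ)+1)) :=
                Finset.sum_le_sum fun i _ => ha i
            _ = (p+1) * z * ∑ n ∈ Finset.range M, (1/((n:ℝ)+1)) := by
                rw [Finset.mul_sum]
            _ ≤ (p+1) * z * (1 + Real.log M) := by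
                exact mul_le_mul_of_nonneg_left (harmonic_bound M) (mul_nonneg (by linarith) hz.le)
            _ ≤ (p+1)*(1+(K:ℝ)) * (z * Real.log (Real.exp 1 + z)) := by
                have h1 : 1 + Real.log M ≤ (1+(K:ℝ)) * Real.log (Real.exp 1 + z) := by
                  nlinarith [hlogM, hlogz]
                have h2 : (0:ℝ) ≤ (p+1) * z := mul_nonneg (by linarith) hz.le
                nlinarith [mul_le_mul_of_nonneg_left h1 h2]
  have part2 : (∑' n : ℕ, ENNReal.ofReal (F (n + M)))
      ≤ ENNReal.ofReal ((1/r) * (z * Real.log (Real.exp 1 + z))) := by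
    have hb' : ∀ n : ℕ, ENNReal.ofReal (F (n + M))
        ≤ ENNReal.ofReal (z ^ s) * ENNReal.ofReal (((M:ℝ) + n + 1) ^ (-(r+1))) := by
      intro n
      rw [← ENNReal.ofReal_mul (Real.rpow_nonneg hz.le s)]
      apply ENNReal.ofReal_le_ofReal
      have := hb (n + M)
      have hc : ((n + M : ℕ):ℝ) + 1 = (M:ℝ) + n + 1 := by push_cast; ring
      have hqr : -q = -(r+1) := by rw [hr_def]; ring
      rw [hc, hqr] at this; exact this
    calc (∑' n : ℕ, ENNReal.ofReal (F (n + M)))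
        ≤ ∑' n : ℕ, ENNReal.ofReal (z ^ s) * ENNReal.ofReal (((M:ℝ) + n + 1) ^ (-(r+1))) :=
          ENNReal.tsum_le_tsum hb'
      _ = ENNReal.ofReal (z ^ s) * ∑' n : ℕ, ENNReal.ofReal (((M:ℝ) + n + 1) ^ (-(r+1))) :=
          ENNReal.tsum_mul_left
      _ ≤ ENNReal.ofReal (z ^ s) * ENNReal.ofReal ((1/r) * (M:ℝ) ^ (-r)) := by
          exact mul_le_mul_right (tail_tsum hr hM1) _
      _ = ENNReal.ofReal (z ^ s * ((1/r) * (M:ℝ) ^ (-r))) :=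
          (ENNReal.ofReal_mul (Real.rpow_nonneg hz.le s)).symm
      _ ≤ _ := by
          apply ENNReal.ofReal_le_ofReal
          have hM0 : (0:ℝ) < (M:ℝ) := by exact_mod_cast hM1
          have hMr : (0:ℝ) < (M:ℝ)^r := Real.rpow_pos_of_pos hM0 r
          have hzM : z ^ (2/(d:ℝ)) ≤ (M:ℝ) ^ r := by
            calc z ^ (2/(d:ℝ)) ≤ (max 1 z) ^ (2/(d:ℝ)) :=
                  Real.rpow_le_rpow hz.le (le_max_right _ _) (by positivity)
              _ ≤ (max 1 z) ^ ((K:ℝ) * r) :=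
                  Real.rpow_le_rpow_of_exponent_le hmax1 hKr
              _ ≤ (L:ℝ) ^ ((K:ℝ) * r) :=
                  Real.rpow_le_rpow (by linarith [hmax1]) hLz (mul_nonneg hK0 hr.le)
              _ = (M:ℝ) ^ r := by
                  rw [hMcast, ← Real.rpow_natCast (L:ℝ) K, ← Real.rpow_mul (by positivity)]
          have hzs : z ^ s = z ^ (2/(d:ℝ)) * z := by
            rw [hs_def, Real.rpow_add hz, Real.rpow_one]
          have hMneg : (M:ℝ) ^ (-r) = ((M:ℝ)^r)⁻¹ := Real.rpow_neg (by positivity) r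
          rw [hzs, hMneg]
          have h1 : z ^ (2/(d:ℝ)) * ((M:ℝ)^r)⁻¹ ≤ 1 := by
            rw [← div_eq_mul_inv, div_le_one hMr]; exact hzM
          have h2 : (0:ℝ) ≤ z ^ (2/(d:ℝ)) := Real.rpow_nonneg hz.le _
          calc z ^ (2/(d:ℝ)) * z * (1/r * ((M:ℝ)^r)⁻¹)
              = (1/r) * z * (z ^ (2/(d:ℝ)) * ((M:ℝ)^r)⁻¹) := by ring
            _ ≤ (1/r) * z * 1 :=
                mul_le_mul_of_nonneg_left h1 (mul_nonneg hr1.le hz.le)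
            _ ≤ (1/r) * (z * Real.log (Real.exp 1 + z)) := by
                rw [mul_one]
                exact mul_le_mul_of_nonneg_left (by nlinarith [hlogz]) hr1.le
  calc _ ≤ ENNReal.ofReal ((p+1)*(1+(K:ℝ)) * (z * Real.log (Real.exp 1 + z)))
        + ENNReal.ofReal ((1/r) * (z * Real.log (Real.exp 1 + z))) := add_le_add part1 part2
    _ = ENNReal.ofReal (((p+1)*(1+(K:ℝ)) + 1/r) * (z * Real.log (Real.exp 1 + z))) := by
        have hzl : (0:ℝ) ≤ z * Real.log (Real.exp 1 + z) :=
          mul_nonneg hz.le (by linarith)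
        rw [← ENNReal.ofReal_add (mul_nonneg (by nlinarith) hzl) (mul_nonneg hr1.le hzl)]
        congr 1; ring
    _ = _ := by
        rw [← ENNReal.ofReal_mul hCpos]

theorem series_finite_for_fast_polynomial_sequence (d : ℕ) (hd : 0 < d)
    (p : ℝ) (hp : (d : ℝ) / (d + 2) < p) (lam : Measure ℝ)
    (hsupp : lam (Set.Iic 0) = 0)
    (hmom : ∫⁻ z in Set.Ioi (0 : ℝ),
        ENNReal.ofReal (z * Real.log (Real.exp 1 + z)) ∂lam ≠ ⊤) :
    (∑' n : ℕ, ∫⁻ z in Set.Ioi (0 : ℝ),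
        ENNReal.ofReal
          (min ((z / ((n : ℝ) + 1) ^ p) ^ (2 / (d : ℝ)))
              (((n : ℝ) + 1) ^ p - (n : ℝ) ^ p)
            * (z / ((n : ℝ) + 1) ^ p)) ∂lam) ≠ ⊤ := by
  obtain ⟨C, hC0, hC⟩ := pointwise_bound d hd p hp
  have hmeas : ∀ n : ℕ, Measurable (fun z : ℝ => ENNReal.ofReal
      (min ((z / ((n : ℝ) + 1) ^ p) ^ (2 / (d : ℝ)))
          (((n : ℝ) + 1) ^ p - (n : ℝ) ^ p)
        * (z / ((n : ℝ) + 1) ^ p))) := by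
    intro n
    apply Measurable.ennreal_ofReal
    exact (((measurable_id.div_const _).pow measurable_const).min measurable_const).mul
      (measurable_id.div_const _)
  rw [← lintegral_tsum (fun n => (hmeas n).aemeasurable)]
  have hbound : ∫⁻ z in Set.Ioi (0:ℝ), (∑' n : ℕ, ENNReal.ofReal
      (min ((z / ((n : ℝ) + 1) ^ p) ^ (2 / (d : ℝ)))
          (((n : ℝ) + 1) ^ p - (n : ℝ) ^ p)
        * (z / ((n : ℝ) + 1) ^ p))) ∂lam
      ≤ ∫⁻ z in Set.Ioi (0:ℝ),
          ENNReal.ofReal C * ENNReal.ofReal (z * Real.log (Real.exp 1 + z)) ∂lam := by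
    apply setLIntegral_mono
    · exact (measurable_const.mul ((measurable_id.mul
        ((measurable_const.add measurable_id).log)).ennreal_ofReal))
    · intro z hz
      exact hC z hz
  refine ne_top_of_le_ne_top ?_ hbound
  rw [lintegral_const_mul' _ _ ENNReal.ofReal_ne_top]
  exact ENNReal.mul_ne_top ENNReal.ofReal_ne_top hmom
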